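/- With the notation of the residue computation (w = e^{2πiy}, a(w) = 2+κγ(1+w̄), Θ as the ratio iΩ/((1+κγ)Λ - iΩ)), the integrals J(y) = ∫_{-1/2}^{1/2} Θ(y-x,x) e^{-2πix}(1-e^{2πiy}) dx and I(y) = ∫_{-1/2}^{1/2} Θ(y-x,x) dx satisfy J(y) = 2(1+κγ)·((1-w)/(w·a(w)))·I(y). -/

import Mathlib

open Real MeasureTheory

noncomputable def Lam (k l : ℝ) : ℝ := 4 * (Real.sin (π * k) ^ 2 + Real.sin (π * l) ^ 2)

noncomputable def Om (k l : ℝ) : ℝ := 2 * (Real.sin (2 * π * k) + Real.sin (2 * π * l))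

noncomputable def Theta (a : ℝ) (k l : ℝ) : ℂ :=
  (Complex.I * ((Om k l : ℝ) : ℂ)) /
    (((1 + a : ℝ) : ℂ) * ((Lam k l : ℝ) : ℂ) - Complex.I * ((Om k l : ℝ) : ℂ))

noncomputable def aFn (a : ℝ) (w : ℂ) : ℂ := 2 + (a : ℂ) * (1 + (starRingEnd ℂ) w)

noncomputable def E (t : ℝ) : ℂ := Complex.exp (2 * (π:ℂ) * Complex.I * (t:ℂ))

lemma E_ne (t : ℝ) : E t ≠ 0 := Complex.exp_ne_zero _

lemma E_add (s t : ℝ) : E (s + t) = E s * E t := by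
  simp only [E, ← Complex.exp_add]; congr 1; push_cast; ring

lemma E_neg (t : ℝ) : E (-t) = (E t)⁻¹ := by
  simp only [E, ← Complex.exp_neg]; congr 1; push_cast; ring

lemma sin_E (t : ℝ) : Complex.sin (2 * (π:ℂ) * (t:ℂ)) = (E t - (E t)⁻¹) * (-Complex.I) / 2 := by
  rw [Complex.sin, ← E_neg]
  have h1 : -(2 * (π:ℂ) * (t:ℂ)) * Complex.I = 2 * (π:ℂ) * Complex.I * ((-t : ℝ) : ℂ) := by
    push_cast; ring
  have h2 : (2 * (π:ℂ) * (t:ℂ)) * Complex.I = 2 * (π:ℂ) * Complex.I * ((t : ℝ) : ℂ) := by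
    ring
  rw [h1, h2, ← E, ← E]; ring

lemma cos_E (t : ℝ) : Complex.cos (2 * ((π:ℂ) * (t:ℂ))) = (E t + (E t)⁻¹) / 2 := by
  rw [Complex.cos, ← E_neg]
  have h1 : -(2 * ((π:ℂ) * (t:ℂ))) * Complex.I = 2 * (π:ℂ) * Complex.I * ((-t : ℝ) : ℂ) := by
    push_cast; ring
  have h2 : (2 * ((π:ℂ) * (t:ℂ))) * Complex.I = 2 * (π:ℂ) * Complex.I * ((t : ℝ) : ℂ) := by
    ring
  rw [h1, h2, ← E, ← E]

lemma om_C (k l : ℝ) : Complex.I * ((Om k l : ℝ) : ℂ)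
    = E k - (E k)⁻¹ + E l - (E l)⁻¹ := by
  simp only [Om]
  push_cast
  rw [sin_E k, sin_E l]
  have := Complex.I_mul_I
  ring_nf
  rw [Complex.I_sq]
  ring

lemma lam_C (k l : ℝ) : ((Lam k l : ℝ) : ℂ)
    = 4 - (E k + (E k)⁻¹) - (E l + (E l)⁻¹) := by
  have h2 : ∀ t : ℝ, Real.sin (π * t) ^ 2 = 1/2 - Real.cos (2 * (π * t)) / 2 :=
    fun t => Real.sin_sq_eq_half_sub _
  simp only [Lam]
  push_cast [h2]
  rw [cos_E k, cos_E l]; ring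

lemma E_sub (y x : ℝ) : E (y - x) = E y * (E x)⁻¹ := by
  rw [sub_eq_add_neg, E_add, E_neg]

lemma N_eq (y x : ℝ) : Complex.I * ((Om (y - x) x : ℝ) : ℂ)
    = (1 - (E y)⁻¹) * (E x + E y * (E x)⁻¹) := by
  rw [om_C, E_sub]
  field_simp [E_ne]
  ring

lemma D_eq (a y x : ℝ) :
    ((1 + a : ℝ) : ℂ) * ((Lam (y - x) x : ℝ) : ℂ) - Complex.I * ((Om (y - x) x : ℝ) : ℂ)
    = 4 * (1 + (a:ℂ))
      - ((1 + (a:ℂ)) * (1 + (E y)⁻¹) + (1 - (E y)⁻¹)) * (E x + E y * (E x)⁻¹) := by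
  rw [lam_C, om_C, E_sub]
  push_cast
  field_simp [E_ne]
  ring

lemma theta_key (a y x : ℝ)
    (hD : ((1 + a : ℝ) : ℂ) * ((Lam (y - x) x : ℝ) : ℂ)
        - Complex.I * ((Om (y - x) x : ℝ) : ℂ) ≠ 0) :
    ((1 + (a:ℂ)) * (1 + (E y)⁻¹) + (1 - (E y)⁻¹)) * (Theta a (y - x) x * (E x + E y * (E x)⁻¹))
      = 4 * (1 + (a:ℂ)) * Theta a (y - x) x - (1 - (E y)⁻¹) * (E x + E y * (E x)⁻¹) := by
  have hN := N_eq y x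
  have hD' := D_eq a y x
  have hDnz : 4 * (1 + (a:ℂ))
      - ((1 + (a:ℂ)) * (1 + (E y)⁻¹) + (1 - (E y)⁻¹)) * (E x + E y * (E x)⁻¹) ≠ 0 :=
    hD' ▸ hD
  rw [Theta, hD', hN]
  set S := E x + E y * (E x)⁻¹ with hS
  set α := (1 - (E y)⁻¹) with hα
  set δ := ((1 + (a:ℂ)) * (1 + (E y)⁻¹) + (1 - (E y)⁻¹)) with hδ
  field_simp
  ring

lemma Om_symm (k l : ℝ) : Om k l = Om l k := by simp [Om]; ring
lemma Lam_symm (k l : ℝ) : Lam k l = Lam l k := by simp [Lam]; ring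
lemma Theta_symm (a k l : ℝ) : Theta a k l = Theta a l k := by
  rw [Theta, Theta, Om_symm, Lam_symm]

lemma Om_per (k l : ℝ) : Om (k - 1) (l + 1) = Om k l := by
  simp only [Om]
  rw [show 2 * π * (k - 1) = 2 * π * k - 2 * π by ring, Real.sin_sub_two_pi,
    show 2 * π * (l + 1) = 2 * π * l + 2 * π by ring, Real.sin_add_two_pi]

lemma Lam_per (k l : ℝ) : Lam (k - 1) (l + 1) = Lam k l := by
  simp only [Lam]
  rw [show π * (k - 1) = π * k - π by ring, Real.sin_sub_pi,
    show π * (l + 1) = π * l + π by ring, Real.sin_add_pi]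
  ring

lemma E_one : E 1 = 1 := by
  rw [E, show 2 * (π:ℂ) * Complex.I * ((1:ℝ):ℂ) = 2 * π * Complex.I by push_cast; ring]
  exact Complex.exp_two_pi_mul_I

lemma E_per (t : ℝ) : E (t + 1) = E t := by rw [E_add, E_one, mul_one]

lemma int_E : (∫ x in (-(1:ℝ)/2)..(1/2), E x) = 0 := by
  have hc : (2 * (π:ℂ) * Complex.I) ≠ 0 := by
    simp [Real.pi_ne_zero, Complex.I_ne_zero, Complex.ofReal_ne_zero]
  have := integral_exp_mul_complex (a := -(1:ℝ)/2) (b := (1:ℝ)/2) hc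
  simp only [E]
  rw [this]
  have h1 : (2 * (π:ℂ) * Complex.I * ((1:ℝ)/2 : ℝ)) = π * Complex.I := by push_cast; ring
  have h2 : (2 * (π:ℂ) * Complex.I * ((-(1:ℝ)/2 : ℝ)) : ℂ) = -(π * Complex.I) := by
    push_cast; ring
  rw [h1, h2, Complex.exp_neg, Complex.exp_pi_mul_I]
  norm_num

lemma int_E_neg : (∫ x in (-(1:ℝ)/2)..(1/2), E (-x)) = 0 := by
  have hc : (-(2 * (π:ℂ) * Complex.I)) ≠ 0 := by
    simp [Real.pi_ne_zero, Complex.I_ne_zero, Complex.ofReal_ne_zero]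
  have := integral_exp_mul_complex (a := -(1:ℝ)/2) (b := (1:ℝ)/2) hc
  have he : ∀ x : ℝ, E (-x) = Complex.exp (-(2 * (π:ℂ) * Complex.I) * (x:ℂ)) := by
    intro x; rw [E]; congr 1; push_cast; ring
  simp only [he]
  rw [this]
  have h1 : (-(2 * (π:ℂ) * Complex.I) * ((1:ℝ)/2 : ℝ)) = -(π * Complex.I) := by push_cast; ring
  have h2 : (-(2 * (π:ℂ) * Complex.I) * ((-(1:ℝ)/2 : ℝ)) : ℂ) = π * Complex.I := by
    push_cast; ring
  rw [h1, h2, Complex.exp_neg, Complex.exp_pi_mul_I]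
  norm_num

lemma cont_E : Continuous E := by
  unfold E; fun_prop

lemma cont_theta (a y : ℝ)
    (hden : ∀ x : ℝ, ((1 + a : ℝ) : ℂ) * ((Lam (y - x) x : ℝ) : ℂ)
        - Complex.I * ((Om (y - x) x : ℝ) : ℂ) ≠ 0) :
    Continuous fun x : ℝ => Theta a (y - x) x := by
  have hOm : Continuous fun x : ℝ => ((Om (y - x) x : ℝ) : ℂ) := by
    simp only [Om]; fun_prop
  have hLam : Continuous fun x : ℝ => ((Lam (y - x) x : ℝ) : ℂ) := by
    simp only [Lam]; fun_prop
  simp only [Theta]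
  exact (continuous_const.mul hOm).div
    ((continuous_const.mul hLam).sub (continuous_const.mul hOm)) hden

lemma symm_integral (a y : ℝ)
    (hden : ∀ x : ℝ, ((1 + a : ℝ) : ℂ) * ((Lam (y - x) x : ℝ) : ℂ)
        - Complex.I * ((Om (y - x) x : ℝ) : ℂ) ≠ 0) :
    (∫ x in (-(1:ℝ)/2)..(1/2), Theta a (y - x) x * E x)
      = E y * ∫ x in (-(1:ℝ)/2)..(1/2), Theta a (y - x) x * E (-x) := by
  set f : ℝ → ℂ := fun x => Theta a (y - x) x * E x with hf
  have hper : Function.Periodic f 1 := by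
    intro x
    simp only [hf]
    rw [show y - (x + 1) = (y - x) - 1 by ring, E_per]
    congr 1
    rw [Theta, Theta, Om_per, Lam_per]
  have key : ∀ x : ℝ, Theta a (y - x) x * E (-x) = (E y)⁻¹ * f (y - x) := by
    intro x
    simp only [hf]
    rw [show y - (y - x) = x by ring, Theta_symm a x (y - x), E_sub, E_neg]
    field_simp [E_ne]
  have h1 : (∫ x in (-(1:ℝ)/2)..(1/2), Theta a (y - x) x * E (-x))
      = (E y)⁻¹ * ∫ x in (-(1:ℝ)/2)..(1/2), f (y - x) := by
    simp only [key]
    exact intervalIntegral.integral_const_mul _ _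
  have h2 : (∫ x in (-(1:ℝ)/2)..(1/2), f (y - x))
      = ∫ x in (y - 1/2)..(y + 1/2), f x := by
    rw [intervalIntegral.integral_comp_sub_left f y]
    norm_num
  have h3 : (∫ x in (y - 1/2)..(y + 1/2), f x) = ∫ x in (-(1:ℝ)/2)..(1/2), f x := by
    have := hper.intervalIntegral_add_eq (y - 1/2) (-(1:ℝ)/2)
    rw [show y - 1/2 + 1 = y + 1/2 by ring, show -(1:ℝ)/2 + 1 = 1/2 by norm_num] at this
    exact this
  rw [h1, h2, h3]
  rw [← hf]
  field_simp [E_ne]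

/-- `J(y) = 2(1+κγ)((1-w)/(w a(w))) I(y)`. -/
theorem stmt_12 (κ γ : ℝ) (hκ : 0 ≤ κ) (hγ : 0 ≤ γ) (y : ℝ)
    (hy : y ∈ Set.Icc (-(1:ℝ)/2) (1/2)) (hy0 : y ≠ 0)
    (hden : ∀ x : ℝ,
      ((1 + κ * γ : ℝ) : ℂ) * ((Lam (y - x) x : ℝ) : ℂ)
        - Complex.I * ((Om (y - x) x : ℝ) : ℂ) ≠ 0)
    (w : ℂ) (hw : w = Complex.exp (2 * (π : ℂ) * Complex.I * (y : ℂ))) :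
    (∫ x in (-(1:ℝ)/2)..(1/2), Theta (κ * γ) (y - x) x
        * Complex.exp (-(2 * (π : ℂ) * Complex.I * (x : ℂ))) * (1 - w))
      = 2 * (1 + (κ * γ : ℝ)) * ((1 - w) / (w * aFn (κ * γ) w))
          * (∫ x in (-(1:ℝ)/2)..(1/2), Theta (κ * γ) (y - x) x) := by
  set a := κ * γ with ha
  have ha0 : 0 ≤ a := mul_nonneg hκ hγ
  have hwE : w = E y := hw
  have hT : Continuous fun x : ℝ => Theta a (y - x) x := cont_theta a y hden
  have hInt : ∀ g : ℝ → ℂ, Continuous g →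
      IntervalIntegrable g MeasureTheory.volume (-(1:ℝ)/2) (1/2) :=
    fun g hg => hg.intervalIntegrable _ _
  have hEn : Continuous fun x : ℝ => E (-x) := cont_E.comp continuous_neg
  set I0 := ∫ x in (-(1:ℝ)/2)..(1/2), Theta a (y - x) x with hI0
  set Im := ∫ x in (-(1:ℝ)/2)..(1/2), Theta a (y - x) x * E (-x) with hIm
  set δ := ((1 + (a:ℂ)) * (1 + (E y)⁻¹) + (1 - (E y)⁻¹)) with hδ
  have hexp : ∀ x : ℝ, Complex.exp (-(2 * (π:ℂ) * Complex.I * (x:ℂ))) = E (-x) := by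
    intro x; rw [E]; congr 1; push_cast; ring
  have hLHS : (∫ x in (-(1:ℝ)/2)..(1/2), Theta a (y - x) x
      * Complex.exp (-(2 * (π:ℂ) * Complex.I * (x:ℂ))) * (1 - w)) = Im * (1 - w) := by
    simp_rw [hexp]
    rw [intervalIntegral.integral_mul_const]
  have hS0 : (∫ x in (-(1:ℝ)/2)..(1/2), (E x + E y * E (-x))) = 0 := by
    rw [intervalIntegral.integral_add (hInt (fun x => E x) cont_E) (hInt (fun x => E y * E (-x)) (continuous_const.mul hEn)),
      intervalIntegral.integral_const_mul, int_E, int_E_neg]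
    simp
  have hsym := symm_integral a y hden
  have hsplit : (∫ x in (-(1:ℝ)/2)..(1/2), Theta a (y - x) x * (E x + E y * E (-x)))
      = (∫ x in (-(1:ℝ)/2)..(1/2), Theta a (y - x) x * E x) + E y * Im := by
    have hptx : ∀ x : ℝ, Theta a (y - x) x * (E x + E y * E (-x))
        = Theta a (y - x) x * E x + E y * (Theta a (y - x) x * E (-x)) := fun x => by ring
    simp_rw [hptx]
    rw [intervalIntegral.integral_add (hInt (fun x => Theta a (y - x) x * E x) (hT.mul cont_E))
      (hInt (fun x => E y * (Theta a (y - x) x * E (-x))) (continuous_const.mul (hT.mul hEn))),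
      intervalIntegral.integral_const_mul]
  have hpt : ∀ x : ℝ, δ * (Theta a (y - x) x * (E x + E y * E (-x)))
      = 4 * (1 + (a:ℂ)) * Theta a (y - x) x - (1 - (E y)⁻¹) * (E x + E y * E (-x)) := by
    intro x
    rw [E_neg x]
    exact theta_key a y x (hden x)
  have hkey : δ * (E y * Im + E y * Im) = 4 * (1 + (a:ℂ)) * I0 := by
    calc δ * (E y * Im + E y * Im)
        = δ * (∫ x in (-(1:ℝ)/2)..(1/2), Theta a (y - x) x * (E x + E y * E (-x))) := by
          rw [hsplit, hsym]
      _ = ∫ x in (-(1:ℝ)/2)..(1/2), δ * (Theta a (y - x) x * (E x + E y * E (-x))) :=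
          (intervalIntegral.integral_const_mul δ _).symm
      _ = ∫ x in (-(1:ℝ)/2)..(1/2),
            (4 * (1 + (a:ℂ)) * Theta a (y - x) x - (1 - (E y)⁻¹) * (E x + E y * E (-x))) :=
          intervalIntegral.integral_congr (fun x _ => hpt x)
      _ = 4 * (1 + (a:ℂ)) * I0
            - (1 - (E y)⁻¹) * ∫ x in (-(1:ℝ)/2)..(1/2), (E x + E y * E (-x)) := by
          rw [intervalIntegral.integral_sub (hInt (fun x => 4 * (1 + (a:ℂ)) * Theta a (y - x) x) (continuous_const.mul hT))
            (hInt (fun x => (1 - (E y)⁻¹) * (E x + E y * E (-x))) (continuous_const.mul (cont_E.add (continuous_const.mul hEn)))),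
            intervalIntegral.integral_const_mul, intervalIntegral.integral_const_mul]
      _ = 4 * (1 + (a:ℂ)) * I0 := by rw [hS0]; ring
  have hconj : (starRingEnd ℂ) w = (E y)⁻¹ := by
    rw [hwE, ← E_neg]
    rw [E, E, ← Complex.exp_conj]
    congr 1
    simp only [map_mul, Complex.conj_ofReal, Complex.conj_I, map_ofNat]
    push_cast
    ring
  have haFn : aFn a w = δ := by
    rw [aFn, hconj, hδ]
    ring
  have hre : ((E y)⁻¹).re = Real.cos (2 * π * (-y)) := by
    rw [← E_neg, E, show 2*(π:ℂ)*Complex.I*((-y:ℝ):ℂ) = ((2*π*(-y):ℝ):ℂ) * Complex.I by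
      push_cast; ring, Complex.exp_ofReal_mul_I_re]
  have hδre : 2 ≤ δ.re := by
    have hδalt : δ = 2 + (a:ℂ) + (a:ℂ) * (E y)⁻¹ := by rw [hδ]; ring
    have : δ.re = 2 + a + a * Real.cos (2 * π * (-y)) := by
      rw [hδalt]
      simp [Complex.add_re, Complex.mul_re, Complex.ofReal_re, Complex.ofReal_im, hre]
    rw [this]
    nlinarith [Real.neg_one_le_cos (2 * π * (-y))]
  have hδne : δ ≠ 0 := by
    intro h
    rw [h, Complex.zero_re] at hδre
    linarith
  rw [hLHS, haFn, hwE]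
  push_cast
  field_simp [E_ne, hδne]
  linear_combination ((1 - E y) / 2) * hkey
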